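/- Let R > 0, let l ≥ 1 and m ≥ 1 be integers, and let κ, Q be real numbers. Suppose U, V, W : ℝ → ℝ are differentiable at every r ∈ (0,R) and satisfy, for all r ∈ (0,R): (i) (κ·l·(l+1)/2 − m)·U(r) = l·Q·( W(r) + (l+2)·V(r) ), and (ii) Q·( (l+2)·V'(r) + W'(r) ) = ( m + κ·(l+1)/2 )·U'(r) + m·(l+1)·U(r)/r. If in addition U(r) tends to a finite limit as r → 0⁺ (regularity at the center of the star), then U(r) = 0 for all r ∈ (0,R). -/

import Mathlib

open Set

/-- For an axial-led hybrid mode with `l ≥ m+1 ≥ 2`, the two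
components of the curl of the perturbed Euler equation together with regularity
of `U` at the center of the star force `U ≡ 0` on `(0,R)`. -/
theorem stmt_3 (R : ℝ) (hR : 0 < R) (l m : ℕ) (hl : 1 ≤ l) (hm : 1 ≤ m)
    (κ Q : ℝ) (U V W U' V' W' : ℝ → ℝ)
    (hU : ∀ r ∈ Ioo (0:ℝ) R, HasDerivAt U (U' r) r)
    (hV : ∀ r ∈ Ioo (0:ℝ) R, HasDerivAt V (V' r) r)
    (hW : ∀ r ∈ Ioo (0:ℝ) R, HasDerivAt W (W' r) r)
    (h1 : ∀ r ∈ Ioo (0:ℝ) R,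
      (κ * l * ((l:ℝ) + 1) / 2 - m) * U r = (l:ℝ) * Q * (W r + ((l:ℝ) + 2) * V r))
    (h2 : ∀ r ∈ Ioo (0:ℝ) R,
      Q * (((l:ℝ) + 2) * V' r + W' r)
        = ((m:ℝ) + κ * ((l:ℝ) + 1) / 2) * U' r + (m:ℝ) * ((l:ℝ) + 1) * U r / r)
    (hreg : ∃ L : ℝ, Filter.Tendsto U (nhdsWithin 0 (Ioi 0)) (nhds L)) :
    ∀ r ∈ Ioo (0:ℝ) R, U r = 0 := by
  obtain ⟨L, hL⟩ := hreg
  have hm0 : (0:ℝ) < (m:ℝ) := by exact_mod_cast hm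
  have hl0 : (0:ℝ) < (l:ℝ) := by exact_mod_cast hl
  -- Step 1: U' r = -l * U r / r on Ioo.
  have key : ∀ r ∈ Ioo (0:ℝ) R, U' r * r = -(l:ℝ) * U r := by
    intro r hr
    have hr0 : (0:ℝ) < r := hr.1
    have hrne : r ≠ 0 := ne_of_gt hr0
    have hd1 : HasDerivAt (fun x => (κ * l * ((l:ℝ) + 1) / 2 - m) * U x)
        ((κ * l * ((l:ℝ) + 1) / 2 - m) * U' r) r := (hU r hr).const_mul _
    have hd2 : HasDerivAt (fun x => (l:ℝ) * Q * (W x + ((l:ℝ) + 2) * V x))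
        ((l:ℝ) * Q * (W' r + ((l:ℝ) + 2) * V' r)) r :=
      ((hW r hr).add ((hV r hr).const_mul _)).const_mul _
    have heq : (fun x => (κ * l * ((l:ℝ) + 1) / 2 - m) * U x)
        =ᶠ[nhds r] (fun x => (l:ℝ) * Q * (W x + ((l:ℝ) + 2) * V x)) := by
      filter_upwards [Ioo_mem_nhds hr.1 hr.2] with x hx using h1 x hx
    have huniq := (hd2.congr_of_eventuallyEq heq).unique hd1
    -- huniq : l*Q*(W' + (l+2)V') = c * U'
    have h2r := h2 r hr
    have h3 : (κ * l * ((l:ℝ) + 1) / 2 - m) * U' r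
        = (l:ℝ) * (((m:ℝ) + κ * ((l:ℝ) + 1) / 2) * U' r
            + (m:ℝ) * ((l:ℝ) + 1) * U r / r) := by
      linear_combination -huniq + (l:ℝ) * h2r
    have hml : ((m:ℝ) * ((l:ℝ) + 1)) ≠ 0 := by positivity
    field_simp at h3
    have h4 : (m:ℝ) * ((l:ℝ) + 1) * (U' r * r + (l:ℝ) * U r) = 0 := by
      linear_combination (-(1:ℝ) / 2) * h3
    have h5 := (mul_eq_zero.mp h4).resolve_left hml
    linarith
  -- Step 2: g = r^l * U r has zero derivative on Ioo.
  set g : ℝ → ℝ := fun x => x ^ l * U x with hg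
  have hg' : ∀ r ∈ Ioo (0:ℝ) R, HasDerivAt g 0 r := by
    intro r hr
    have hrne : r ≠ 0 := ne_of_gt hr.1
    have hd : HasDerivAt g ((l:ℝ) * r ^ (l - 1) * U r + r ^ l * U' r) r := by
      exact (hasDerivAt_pow l r).mul (hU r hr)
    have hpow : r ^ l = r ^ (l - 1) * r := by
      rw [← pow_succ]; congr 1; omega
    have : (l:ℝ) * r ^ (l - 1) * U r + r ^ l * U' r = 0 := by
      rw [hpow]
      linear_combination r ^ (l - 1) * key r hr
    rwa [this] at hd
  -- Step 3: g is constant on Ioo.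
  have hconst : ∀ a ∈ Ioo (0:ℝ) R, ∀ b ∈ Ioo (0:ℝ) R, a ≤ b → g b = g a := by
    intro a ha b hb hab
    have hsub : Icc a b ⊆ Ioo (0:ℝ) R := fun x hx =>
      ⟨lt_of_lt_of_le ha.1 hx.1, lt_of_le_of_lt hx.2 hb.2⟩
    have hcont : ContinuousOn g (Icc a b) := fun x hx =>
      ((hg' x (hsub hx)).continuousAt).continuousWithinAt
    have hderiv : ∀ x ∈ Ico a b, HasDerivWithinAt g 0 (Ici x) x := fun x hx =>
      (hg' x (hsub ⟨hx.1, le_of_lt hx.2⟩)).hasDerivWithinAt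
    exact constant_of_has_deriv_right_zero hcont hderiv b ⟨hab, le_refl b⟩
  -- Step 4: conclude.
  intro r hr
  have hall : ∀ x ∈ Ioo (0:ℝ) R, g x = g r := by
    intro x hx
    rcases le_total x r with h | h
    · exact (hconst x hx r hr h).symm
    · exact hconst r hr x hx h
  have htend0 : Filter.Tendsto g (nhdsWithin 0 (Ioi 0)) (nhds 0) := by
    have hp : Filter.Tendsto (fun x : ℝ => x ^ l) (nhdsWithin 0 (Ioi 0)) (nhds 0) := by
      have := ((continuous_pow l).tendsto 0).mono_left (nhdsWithin_le_nhds (s := Ioi (0:ℝ)))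
      simpa [zero_pow (by omega : l ≠ 0)] using this
    simpa using hp.mul hL
  have htendc : Filter.Tendsto g (nhdsWithin 0 (Ioi 0)) (nhds (g r)) := by
    apply Filter.Tendsto.congr' _ tendsto_const_nhds
    filter_upwards [Ioo_mem_nhdsGT_of_mem (⟨le_refl 0, hR⟩ : (0:ℝ) ∈ Ico (0:ℝ) R)]
      with x hx using (hall x hx).symm
  have hgr : g r = 0 := tendsto_nhds_unique htendc htend0
  have hrpow : r ^ l ≠ 0 := pow_ne_zero l (ne_of_gt hr.1)
  have : r ^ l * U r = 0 := hgr
  exact (mul_eq_zero.mp this).resolve_left hrpow
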